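/- Consider a backward random walk γ on the grid starting at x_n at time step l+1, moving by ω Δx with ω ∈ B at each backward time step Δt, with transition probabilities ρ^{k+1}_m(ω) = 1/(2d) − (λ/2)(ω·ξ^{k+1}_m), controlled by a field ξ with ‖ξ‖_∞ ≤ (dλ)^{-1}. Let η(γ) be the random curve with η^{l+1} = x_n and η^k(γ) = η^{k+1}(γ) − ξ^{k+1}_{m(γ^{k+1})} Δt. Define σ̃^k_i := E[|(η^k(γ) − γ^k)^i|²] and δ̃^k_i := E[|(η^k(γ) − γ^k)^i|]. Then for every control ξ and all 0 ≤ k ≤ l+1: (δ̃^k_i)² ≤ σ̃^k_i ≤ (t_{l+1} − t_k) · Δx/λ, where λ = Δt/Δx and t_k = kΔt. -/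

import Mathlib

open scoped RealInnerProductSpace

namespace RandomWalkVariance

/-- The step vector `ω ∈ B = {±e₁,…,±e_d}`. -/
noncomputable def stepVec (d : ℕ) (z : Fin d × Bool) : EuclideanSpace ℝ (Fin d) :=
  (if z.2 then (1 : ℝ) else -1) • EuclideanSpace.single z.1 (1 : ℝ)

/-- Position `γ^k` of the backward walk started at `x_n` at time step `l+1`, determined by the
step sequence `s` (where `s j` is the step taken in the transition from time `j+1` to time `j`). -/
noncomputable def walk (d l : ℕ) (Δx : ℝ) (xn : EuclideanSpace ℝ (Fin d))
    (s : Fin (l + 1) → Fin d × Bool) (k : ℕ) : EuclideanSpace ℝ (Fin d) :=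
  xn + Δx • ∑ j : Fin (l + 1), if k ≤ (j : ℕ) then stepVec d (s j) else 0

/-- The curve `η(γ)`: `η^{l+1} = x_n`, `η^k = η^{k+1} − ξ^{k+1}_{m(γ^{k+1})} Δt`. -/
noncomputable def etaCurve (d l : ℕ) (Δx Δt : ℝ)
    (ξ : EuclideanSpace ℝ (Fin d) → ℕ → EuclideanSpace ℝ (Fin d))
    (xn : EuclideanSpace ℝ (Fin d)) (s : Fin (l + 1) → Fin d × Bool) (k : ℕ) :
    EuclideanSpace ℝ (Fin d) :=
  xn - Δt • ∑ j : Fin (l + 1),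
    if k ≤ (j : ℕ) then ξ (walk d l Δx xn s ((j : ℕ) + 1)) ((j : ℕ) + 1) else 0

/-- The probability of the path with step sequence `s`, the product of the transition
probabilities `ρ^{k+1}_m(ω) = 1/(2d) − (λ/2)(ω·ξ^{k+1}_m)` along the walk. -/
noncomputable def pathProb (d l : ℕ) (Δx lam : ℝ)
    (ξ : EuclideanSpace ℝ (Fin d) → ℕ → EuclideanSpace ℝ (Fin d))
    (xn : EuclideanSpace ℝ (Fin d)) (s : Fin (l + 1) → Fin d × Bool) : ℝ :=
  ∏ j : Fin (l + 1),
    (1 / (2 * d) - (lam / 2) * ⟪stepVec d (s j), ξ (walk d l Δx xn s ((j : ℕ) + 1)) ((j : ℕ) + 1)⟫)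

section Lemmas

variable (d l : ℕ) (Δx Δt lam : ℝ)
  (ξ : EuclideanSpace ℝ (Fin d) → ℕ → EuclideanSpace ℝ (Fin d))
  (xn : EuclideanSpace ℝ (Fin d))

lemma stepVec_apply (z : Fin d × Bool) (i : Fin d) :
    stepVec d z i = (if z.2 then (1:ℝ) else -1) * (if z.1 = i then 1 else 0) := by
  simp only [stepVec, PiLp.smul_apply, EuclideanSpace.single_apply, smul_eq_mul]
  by_cases h : z.1 = i
  · subst h; simp
  · rw [if_neg h, if_neg (Ne.symm h), mul_zero]

lemma inner_stepVec (z : Fin d × Bool) (v : EuclideanSpace ℝ (Fin d)) :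
    ⟪stepVec d z, v⟫ = (if z.2 then (1:ℝ) else -1) * v z.1 := by
  rw [stepVec, real_inner_smul_left, EuclideanSpace.inner_single_left]
  simp

lemma walk_update (s : Fin (l+1) → Fin d × Bool) (j : Fin (l+1)) (z : Fin d × Bool)
    (m : ℕ) (h : (j : ℕ) < m) :
    walk d l Δx xn (Function.update s j z) m = walk d l Δx xn s m := by
  unfold walk
  congr 2
  refine Finset.sum_congr rfl fun j' _ => ?_
  by_cases hm : m ≤ (j' : ℕ)
  · have : j ≠ j' := by intro e; subst e; omega
    simp [hm, Function.update_of_ne (Ne.symm this)]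
  · simp [hm]

noncomputable def rho (j : Fin (l+1)) (s : Fin (l+1) → Fin d × Bool) : ℝ :=
  1 / (2 * d) - lam / 2 *
    ⟪stepVec d (s j), ξ (walk d l Δx xn s ((j : ℕ) + 1)) ((j : ℕ) + 1)⟫

noncomputable def Pre (m : ℕ) (s : Fin (l+1) → Fin d × Bool) : ℝ :=
  ∏ j ∈ Finset.univ.filter (fun j : Fin (l+1) => m ≤ (j : ℕ)), rho d l Δx lam ξ xn j s

noncomputable def Xf (i : Fin d) (j : Fin (l+1)) (s : Fin (l+1) → Fin d × Bool) : ℝ :=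
  Δt * ξ (walk d l Δx xn s ((j : ℕ) + 1)) ((j : ℕ) + 1) i + Δx * stepVec d (s j) i

noncomputable def Dk (i : Fin d) (k : ℕ) (s : Fin (l+1) → Fin d × Bool) : ℝ :=
  ∑ j ∈ Finset.univ.filter (fun j : Fin (l+1) => k ≤ (j : ℕ)), Xf d l Δx Δt ξ xn i j s

lemma rho_update (s : Fin (l+1) → Fin d × Bool) (j c : Fin (l+1)) (z : Fin d × Bool)
    (h : (c : ℕ) < (j : ℕ)) :
    rho d l Δx lam ξ xn j (Function.update s c z) = rho d l Δx lam ξ xn j s := by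
  have hcj : c ≠ j := by intro e; subst e; omega
  rw [rho, rho, Function.update_of_ne (Ne.symm hcj),
    walk_update d l Δx xn s c z ((j : ℕ) + 1) (by omega)]

lemma rho_update_self (s : Fin (l+1) → Fin d × Bool) (c : Fin (l+1)) (z : Fin d × Bool) :
    rho d l Δx lam ξ xn c (Function.update s c z) =
      1 / (2 * d) - lam / 2 *
        ⟪stepVec d z, ξ (walk d l Δx xn s ((c : ℕ) + 1)) ((c : ℕ) + 1)⟫ := by
  rw [rho, Function.update_self, walk_update d l Δx xn s c z ((c : ℕ) + 1) (by omega)]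

lemma Xf_update (s : Fin (l+1) → Fin d × Bool) (i : Fin d) (j c : Fin (l+1))
    (z : Fin d × Bool) (h : (c : ℕ) < (j : ℕ)) :
    Xf d l Δx Δt ξ xn i j (Function.update s c z) = Xf d l Δx Δt ξ xn i j s := by
  have hcj : c ≠ j := by intro e; subst e; omega
  rw [Xf, Xf, Function.update_of_ne (Ne.symm hcj),
    walk_update d l Δx xn s c z ((j : ℕ) + 1) (by omega)]

lemma Xf_update_self (s : Fin (l+1) → Fin d × Bool) (i : Fin d) (c : Fin (l+1))
    (z : Fin d × Bool) :
    Xf d l Δx Δt ξ xn i c (Function.update s c z) =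
      Δt * ξ (walk d l Δx xn s ((c : ℕ) + 1)) ((c : ℕ) + 1) i + Δx * stepVec d z i := by
  rw [Xf, Function.update_self, walk_update d l Δx xn s c z ((c : ℕ) + 1) (by omega)]

lemma Dk_update (s : Fin (l+1) → Fin d × Bool) (i : Fin d) (k : ℕ) (c : Fin (l+1))
    (z : Fin d × Bool) (h : (c : ℕ) < k) :
    Dk d l Δx Δt ξ xn i k (Function.update s c z) = Dk d l Δx Δt ξ xn i k s := by
  refine Finset.sum_congr rfl fun j hj => ?_
  rw [Finset.mem_filter] at hj
  exact Xf_update d l Δx Δt ξ xn s i j c z (by omega)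

lemma Pre_update (s : Fin (l+1) → Fin d × Bool) (m : ℕ) (c : Fin (l+1))
    (z : Fin d × Bool) (h : (c : ℕ) < m) :
    Pre d l Δx lam ξ xn m (Function.update s c z) = Pre d l Δx lam ξ xn m s := by
  refine Finset.prod_congr rfl fun j hj => ?_
  rw [Finset.mem_filter] at hj
  exact rho_update d l Δx lam ξ xn s j c z (by omega)

-- sums over the step alphabet
lemma zsum_rho (hd : 0 < d) (v : EuclideanSpace ℝ (Fin d)) :
    ∑ z : Fin d × Bool, (1 / (2 * (d:ℝ)) - lam / 2 * ⟪stepVec d z, v⟫) = 1 := by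
  rw [Fintype.sum_prod_type]
  simp only [inner_stepVec, Fintype.sum_bool, Bool.false_eq_true, if_true, if_false]
  have : ∀ a : Fin d,
      (1 / (2 * (d:ℝ)) - lam / 2 * (1 * v a)) + (1 / (2 * (d:ℝ)) - lam / 2 * (-1 * v a))
        = 1 / d := by
    intro a; field_simp; ring
  rw [Finset.sum_congr rfl fun a _ => this a, Finset.sum_const, Finset.card_univ,
    Fintype.card_fin, nsmul_eq_mul]
  field_simp

lemma zsum_rho_step (v : EuclideanSpace ℝ (Fin d)) (i : Fin d) :
    ∑ z : Fin d × Bool,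
      (1 / (2 * (d:ℝ)) - lam / 2 * ⟪stepVec d z, v⟫) * stepVec d z i = -lam * v i := by
  rw [Fintype.sum_prod_type]
  simp only [inner_stepVec, stepVec_apply, Fintype.sum_bool, Bool.false_eq_true, if_true, if_false]
  have : ∀ a : Fin d,
      (1 / (2 * (d:ℝ)) - lam / 2 * (1 * v a)) * (1 * if a = i then (1:ℝ) else 0)
        + (1 / (2 * (d:ℝ)) - lam / 2 * (-1 * v a)) * (-1 * if a = i then (1:ℝ) else 0)
        = if a = i then -lam * v a else 0 := by
    intro a; by_cases h : a = i <;> simp [h] <;> ring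
  rw [Finset.sum_congr rfl fun a _ => this a, Finset.sum_ite_eq' Finset.univ i
    (fun a => -lam * v a)]
  simp

lemma zsum_rho_step_sq (hd : 0 < d) (v : EuclideanSpace ℝ (Fin d)) (i : Fin d) :
    ∑ z : Fin d × Bool,
      (1 / (2 * (d:ℝ)) - lam / 2 * ⟪stepVec d z, v⟫) * (stepVec d z i : ℝ) ^ 2 = 1 / (d:ℝ) := by
  rw [Fintype.sum_prod_type]
  simp only [inner_stepVec, stepVec_apply, Fintype.sum_bool, Bool.false_eq_true, if_true, if_false]
  have : ∀ a : Fin d,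
      (1 / (2 * (d:ℝ)) - lam / 2 * (1 * v a)) * (1 * if a = i then (1:ℝ) else 0) ^ 2
        + (1 / (2 * (d:ℝ)) - lam / 2 * (-1 * v a)) * (-1 * if a = i then (1:ℝ) else 0) ^ 2
        = if a = i then 1 / (d:ℝ) else 0 := by
    intro a; by_cases h : a = i <;> simp [h] <;> ring
  rw [Finset.sum_congr rfl fun a _ => this a, Finset.sum_ite_eq' Finset.univ i
    (fun _ => 1 / (d:ℝ))]
  simp

lemma rho_form_nonneg (hd : 0 < d) (hlam : 0 < lam)
    (hξ : ∀ x k i, |ξ x k i| ≤ ((d : ℝ) * lam)⁻¹)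
    (z : Fin d × Bool) (x : EuclideanSpace ℝ (Fin d)) (m : ℕ) :
    0 ≤ 1 / (2 * (d:ℝ)) - lam / 2 * ⟪stepVec d z, ξ x m⟫ := by
  have hd' : (0:ℝ) < d := by exact_mod_cast hd
  have h1 : |⟪stepVec d z, ξ x m⟫| ≤ ((d : ℝ) * lam)⁻¹ := by
    rw [inner_stepVec]
    rcases z with ⟨a, b⟩
    have := hξ x m a
    cases b <;>
      simp only [if_true, Bool.false_eq_true, if_false, one_mul, neg_one_mul, abs_neg] <;>
      exact this
  have h2 : lam / 2 * ⟪stepVec d z, ξ x m⟫ ≤ lam / 2 * ((d : ℝ) * lam)⁻¹ := by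
    have := (abs_le.mp h1).2
    nlinarith
  have h3 : lam / 2 * ((d : ℝ) * lam)⁻¹ = 1 / (2 * (d:ℝ)) := by
    field_simp
  linarith

lemma rho_nonneg (hd : 0 < d) (hlam : 0 < lam)
    (hξ : ∀ x k i, |ξ x k i| ≤ ((d : ℝ) * lam)⁻¹)
    (j : Fin (l+1)) (s : Fin (l+1) → Fin d × Bool) :
    0 ≤ rho d l Δx lam ξ xn j s :=
  rho_form_nonneg d lam ξ hd hlam hξ _ _ _

lemma Pre_nonneg (hd : 0 < d) (hlam : 0 < lam)
    (hξ : ∀ x k i, |ξ x k i| ≤ ((d : ℝ) * lam)⁻¹)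
    (m : ℕ) (s : Fin (l+1) → Fin d × Bool) :
    0 ≤ Pre d l Δx lam ξ xn m s :=
  Finset.prod_nonneg fun j _ => rho_nonneg d l Δx lam ξ xn hd hlam hξ j s

/-- The key one-step second-moment estimate. -/
lemma zsum_sq_le (hd : 0 < d) (hlam : 0 < lam) (hΔx : 0 < Δx) (hΔt : Δt = lam * Δx)
    (v : EuclideanSpace ℝ (Fin d)) (i : Fin d) (hv : |v i| ≤ ((d : ℝ) * lam)⁻¹)
    (c : ℝ) :
    ∑ z : Fin d × Bool, (1 / (2 * (d:ℝ)) - lam / 2 * ⟪stepVec d z, v⟫) *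
        (c + (Δt * v i + Δx * stepVec d z i)) ^ 2
      ≤ c ^ 2 + Δx ^ 2 := by
  have hd' : (1:ℝ) ≤ d := by exact_mod_cast hd
  have expand : ∀ z : Fin d × Bool,
      (1 / (2 * (d:ℝ)) - lam / 2 * ⟪stepVec d z, v⟫) *
          (c + (Δt * v i + Δx * stepVec d z i)) ^ 2
        = (c + Δt * v i) ^ 2 * (1 / (2 * (d:ℝ)) - lam / 2 * ⟪stepVec d z, v⟫)
          + 2 * (c + Δt * v i) * Δx *
              ((1 / (2 * (d:ℝ)) - lam / 2 * ⟪stepVec d z, v⟫) * stepVec d z i)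
          + Δx ^ 2 * ((1 / (2 * (d:ℝ)) - lam / 2 * ⟪stepVec d z, v⟫) * (stepVec d z i) ^ 2) := by
    intro z; ring
  rw [Finset.sum_congr rfl fun z _ => expand z]
  rw [Finset.sum_add_distrib, Finset.sum_add_distrib, ← Finset.mul_sum, ← Finset.mul_sum,
    ← Finset.mul_sum, zsum_rho d lam hd v, zsum_rho_step d lam v i,
    zsum_rho_step_sq d lam hd v i]
  have hdpos : (0:ℝ) < d := by exact_mod_cast hd
  have key : Δx * lam * v i = Δt * v i := by rw [hΔt]; ring
  have h1 : Δx ^ 2 * (1 / (d:ℝ)) ≤ Δx ^ 2 := by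
    rw [mul_one_div]
    exact div_le_self (by positivity) hd'
  rw [show (c + Δt * v i) ^ 2 * 1 + 2 * (c + Δt * v i) * Δx * (-lam * v i)
        + Δx ^ 2 * (1 / (d:ℝ))
      = c ^ 2 - (lam * Δx * v i) ^ 2 + Δx ^ 2 * (1 / (d:ℝ)) from by rw [hΔt]; ring]
  nlinarith [sq_nonneg (lam * Δx * v i)]

/-- Summing a function of `update s c z` over all `(s, z)` counts every sequence `2d` times. -/
lemma sum_update_eq (c : Fin (l+1)) (H : (Fin (l+1) → Fin d × Bool) → ℝ) :
    ∑ s : Fin (l+1) → Fin d × Bool, ∑ z : Fin d × Bool, H (Function.update s c z)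
      = (2 * (d:ℝ)) * ∑ s : Fin (l+1) → Fin d × Bool, H s := by
  let e : ((Fin (l+1) → Fin d × Bool) × (Fin d × Bool)) ≃
      ((Fin (l+1) → Fin d × Bool) × (Fin d × Bool)) :=
    { toFun := fun p => (Function.update p.1 c p.2, p.1 c)
      invFun := fun p => (Function.update p.1 c p.2, p.1 c)
      left_inv := fun p => by
        simp [Function.update_idem, Function.update_eq_self]
      right_inv := fun p => by
        simp [Function.update_idem, Function.update_eq_self] }
  calc ∑ s : Fin (l+1) → Fin d × Bool, ∑ z : Fin d × Bool, H (Function.update s c z)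
      = ∑ p : (Fin (l+1) → Fin d × Bool) × (Fin d × Bool), H (Function.update p.1 c p.2) := by
        rw [Fintype.sum_prod_type]
    _ = ∑ p : (Fin (l+1) → Fin d × Bool) × (Fin d × Bool), H p.1 :=
        Fintype.sum_equiv e _ _ (fun p => rfl)
    _ = ∑ s : Fin (l+1) → Fin d × Bool, ∑ _z : Fin d × Bool, H s := by
        rw [Fintype.sum_prod_type]
    _ = (2 * (d:ℝ)) * ∑ s : Fin (l+1) → Fin d × Bool, H s := by
        have hs : ∀ s : Fin (l+1) → Fin d × Bool,
            ∑ _z : Fin d × Bool, H s = (2 * (d:ℝ)) * H s := fun s => by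
          rw [Finset.sum_const, Finset.card_univ, Fintype.card_prod, Fintype.card_fin,
            Fintype.card_bool, nsmul_eq_mul]
          push_cast; ring
        rw [Finset.sum_congr rfl fun s _ => hs s, ← Finset.mul_sum]

/-- Conditioning on the coordinate `c`. -/
lemma sum_mul_cond (c : Fin (l+1)) (F H : (Fin (l+1) → Fin d × Bool) → ℝ)
    (hF : ∀ s z, F (Function.update s c z) = F s) :
    (2 * (d:ℝ)) * ∑ s : Fin (l+1) → Fin d × Bool, F s * H s
      = ∑ s : Fin (l+1) → Fin d × Bool, F s * ∑ z : Fin d × Bool,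
          H (Function.update s c z) := by
  rw [← sum_update_eq d l c (fun s => F s * H s)]
  refine Finset.sum_congr rfl fun s _ => ?_
  rw [Finset.mul_sum]
  exact Finset.sum_congr rfl fun z _ => by rw [hF s z]

lemma filter_split (m : ℕ) (hm : m ≤ l) :
    Finset.univ.filter (fun j : Fin (l+1) => m ≤ (j : ℕ))
      = insert (⟨m, by omega⟩ : Fin (l+1))
          (Finset.univ.filter (fun j : Fin (l+1) => m + 1 ≤ (j : ℕ))) := by
  ext j
  simp only [Finset.mem_filter, Finset.mem_insert, Finset.mem_univ, true_and, Fin.ext_iff]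
  omega

lemma self_not_mem_filter (m : ℕ) (hm : m ≤ l) :
    (⟨m, by omega⟩ : Fin (l+1)) ∉
      Finset.univ.filter (fun j : Fin (l+1) => m + 1 ≤ (j : ℕ)) := by
  simp

lemma Pre_split (m : ℕ) (hm : m ≤ l) (s : Fin (l+1) → Fin d × Bool) :
    Pre d l Δx lam ξ xn m s
      = rho d l Δx lam ξ xn (⟨m, by omega⟩ : Fin (l+1)) s * Pre d l Δx lam ξ xn (m+1) s := by
  rw [Pre, filter_split l m hm, Finset.prod_insert (self_not_mem_filter l m hm)]
  rfl

lemma Dk_split (i : Fin d) (m : ℕ) (hm : m ≤ l) (s : Fin (l+1) → Fin d × Bool) :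
    Dk d l Δx Δt ξ xn i m s
      = Xf d l Δx Δt ξ xn i (⟨m, by omega⟩ : Fin (l+1)) s + Dk d l Δx Δt ξ xn i (m+1) s := by
  rw [Dk, filter_split l m hm, Finset.sum_insert (self_not_mem_filter l m hm)]
  rfl

lemma pathProb_eq (s : Fin (l+1) → Fin d × Bool) :
    pathProb d l Δx lam ξ xn s = Pre d l Δx lam ξ xn 0 s := by
  rw [Pre, Finset.filter_true_of_mem (fun j _ => Nat.zero_le _)]
  rfl

lemma Pre_top (s : Fin (l+1) → Fin d × Bool) :
    Pre d l Δx lam ξ xn (l+1) s = 1 := by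
  rw [Pre, Finset.filter_false_of_mem, Finset.prod_empty]
  intro j _
  omega

/-- Marginalizing out the first `m` transition probabilities. -/
lemma marg (hd : 0 < d) (m : ℕ) (hm : m ≤ l + 1)
    (G : (Fin (l+1) → Fin d × Bool) → ℝ)
    (hG : ∀ c : Fin (l+1), (c : ℕ) < m → ∀ s z, G (Function.update s c z) = G s) :
    (2 * (d:ℝ)) ^ m * ∑ s : Fin (l+1) → Fin d × Bool, pathProb d l Δx lam ξ xn s * G s
      = ∑ s : Fin (l+1) → Fin d × Bool, Pre d l Δx lam ξ xn m s * G s := by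
  induction m with
  | zero =>
    rw [pow_zero, one_mul]
    exact Finset.sum_congr rfl fun s _ => by rw [pathProb_eq]
  | succ m IH =>
    have hml : m ≤ l := by omega
    set c : Fin (l+1) := (⟨m, by omega⟩ : Fin (l+1)) with hc
    have step1 : (2 * (d:ℝ)) ^ m *
        ∑ s : Fin (l+1) → Fin d × Bool, pathProb d l Δx lam ξ xn s * G s
        = ∑ s : Fin (l+1) → Fin d × Bool, Pre d l Δx lam ξ xn m s * G s :=
      IH (by omega) fun c' hc' s z => hG c' (by omega) s z
    have step2 : ∑ s : Fin (l+1) → Fin d × Bool, Pre d l Δx lam ξ xn m s * G s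
        = ∑ s : Fin (l+1) → Fin d × Bool,
            (Pre d l Δx lam ξ xn (m+1) s * G s) * rho d l Δx lam ξ xn c s :=
      Finset.sum_congr rfl fun s _ => by rw [Pre_split d l Δx lam ξ xn m hml s]; ring
    have hF : ∀ s z, (Pre d l Δx lam ξ xn (m+1) (Function.update s c z) *
        G (Function.update s c z)) = Pre d l Δx lam ξ xn (m+1) s * G s := by
      intro s z
      rw [Pre_update d l Δx lam ξ xn s (m+1) c z (by simp [hc]),
        hG c (by simp [hc]) s z]
    have step3 : (2 * (d:ℝ)) *
        ∑ s : Fin (l+1) → Fin d × Bool,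
          (Pre d l Δx lam ξ xn (m+1) s * G s) * rho d l Δx lam ξ xn c s
        = ∑ s : Fin (l+1) → Fin d × Bool,
            (Pre d l Δx lam ξ xn (m+1) s * G s) * ∑ z : Fin d × Bool,
              rho d l Δx lam ξ xn c (Function.update s c z) :=
      sum_mul_cond d l c _ _ hF
    have step4 : ∀ s : Fin (l+1) → Fin d × Bool,
        ∑ z : Fin d × Bool, rho d l Δx lam ξ xn c (Function.update s c z) = 1 := by
      intro s
      rw [Finset.sum_congr rfl fun z _ => rho_update_self d l Δx lam ξ xn s c z]
      exact zsum_rho d lam hd _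
    calc (2 * (d:ℝ)) ^ (m+1) *
          ∑ s : Fin (l+1) → Fin d × Bool, pathProb d l Δx lam ξ xn s * G s
        = (2 * (d:ℝ)) * ((2 * (d:ℝ)) ^ m *
            ∑ s : Fin (l+1) → Fin d × Bool, pathProb d l Δx lam ξ xn s * G s) := by ring
      _ = (2 * (d:ℝ)) * ∑ s : Fin (l+1) → Fin d × Bool,
            (Pre d l Δx lam ξ xn (m+1) s * G s) * rho d l Δx lam ξ xn c s := by
          rw [step1, step2]
      _ = ∑ s : Fin (l+1) → Fin d × Bool,
            (Pre d l Δx lam ξ xn (m+1) s * G s) * ∑ z : Fin d × Bool,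
              rho d l Δx lam ξ xn c (Function.update s c z) := step3
      _ = ∑ s : Fin (l+1) → Fin d × Bool, Pre d l Δx lam ξ xn (m+1) s * G s := by
          refine Finset.sum_congr rfl fun s _ => ?_
          rw [step4 s, mul_one]

lemma card_steps : (Fintype.card (Fin (l+1) → Fin d × Bool) : ℝ) = (2 * (d:ℝ)) ^ (l+1) := by
  rw [Fintype.card_fun, Fintype.card_prod, Fintype.card_fin, Fintype.card_bool,
    Fintype.card_fin]
  push_cast
  ring

lemma sum_pathProb (hd : 0 < d) :
    ∑ s : Fin (l+1) → Fin d × Bool, pathProb d l Δx lam ξ xn s = 1 := by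
  have h := marg d l Δx lam ξ xn hd (l+1) le_rfl (fun _ => 1) (fun _ _ _ _ => rfl)
  simp only [mul_one, Pre_top] at h
  rw [Finset.sum_const, Finset.card_univ, nsmul_eq_mul, mul_one, card_steps] at h
  have h2d : (0:ℝ) < 2 * (d:ℝ) := by positivity
  have := pow_ne_zero (l+1) (ne_of_gt h2d)
  field_simp at h
  exact h

lemma sum_Pre (hd : 0 < d) (m : ℕ) (hm : m ≤ l + 1) :
    ∑ s : Fin (l+1) → Fin d × Bool, Pre d l Δx lam ξ xn m s = (2 * (d:ℝ)) ^ m := by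
  have h := marg d l Δx lam ξ xn hd m hm (fun _ => 1) (fun _ _ _ _ => rfl)
  simp only [mul_one] at h
  rw [sum_pathProb d l Δx lam ξ xn hd, mul_one] at h
  exact h.symm

/-- The main variance estimate, by downward induction from time `l+1`. -/
lemma varV (hd : 0 < d) (hlam : 0 < lam) (hΔx : 0 < Δx) (hΔt : Δt = lam * Δx)
    (hξ : ∀ x k i, |ξ x k i| ≤ ((d : ℝ) * lam)⁻¹) (i : Fin d) :
    ∀ m k : ℕ, k + m = l + 1 →
      ∑ s : Fin (l+1) → Fin d × Bool, Pre d l Δx lam ξ xn k s * (Dk d l Δx Δt ξ xn i k s) ^ 2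
        ≤ (m : ℝ) * Δx ^ 2 * (2 * (d:ℝ)) ^ k := by
  intro m
  induction m with
  | zero =>
    intro k hk
    have hk' : k = l + 1 := by omega
    subst hk'
    have hD : ∀ s, Dk d l Δx Δt ξ xn i (l+1) s = 0 := by
      intro s
      rw [Dk, Finset.filter_false_of_mem (fun j _ => by omega), Finset.sum_empty]
    simp [hD]
  | succ m IH =>
    intro k hk
    have hkl : k ≤ l := by omega
    set c : Fin (l+1) := (⟨k, by omega⟩ : Fin (l+1)) with hc
    have h2d : (0:ℝ) < 2 * (d:ℝ) := by positivity
    -- rewrite LHS using the splits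
    have lhs_eq : ∑ s : Fin (l+1) → Fin d × Bool,
        Pre d l Δx lam ξ xn k s * (Dk d l Δx Δt ξ xn i k s) ^ 2
        = ∑ s : Fin (l+1) → Fin d × Bool,
            Pre d l Δx lam ξ xn (k+1) s *
              (rho d l Δx lam ξ xn c s *
                (Dk d l Δx Δt ξ xn i (k+1) s + Xf d l Δx Δt ξ xn i c s) ^ 2) := by
      refine Finset.sum_congr rfl fun s _ => ?_
      rw [Pre_split d l Δx lam ξ xn k hkl s, Dk_split d l Δx Δt ξ xn i k hkl s]
      ring
    have hF : ∀ s z, Pre d l Δx lam ξ xn (k+1) (Function.update s c z)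
        = Pre d l Δx lam ξ xn (k+1) s := fun s z =>
      Pre_update d l Δx lam ξ xn s (k+1) c z (by simp [hc])
    have cond := sum_mul_cond d l c (Pre d l Δx lam ξ xn (k+1))
      (fun s => rho d l Δx lam ξ xn c s *
        (Dk d l Δx Δt ξ xn i (k+1) s + Xf d l Δx Δt ξ xn i c s) ^ 2) hF
    have inner_le : ∀ s : Fin (l+1) → Fin d × Bool,
        ∑ z : Fin d × Bool,
          rho d l Δx lam ξ xn c (Function.update s c z) *
            (Dk d l Δx Δt ξ xn i (k+1) (Function.update s c z)
              + Xf d l Δx Δt ξ xn i c (Function.update s c z)) ^ 2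
          ≤ (Dk d l Δx Δt ξ xn i (k+1) s) ^ 2 + Δx ^ 2 := by
      intro s
      have hz : ∀ z : Fin d × Bool,
          rho d l Δx lam ξ xn c (Function.update s c z) *
            (Dk d l Δx Δt ξ xn i (k+1) (Function.update s c z)
              + Xf d l Δx Δt ξ xn i c (Function.update s c z)) ^ 2
          = (1 / (2 * (d:ℝ)) - lam / 2 *
              ⟪stepVec d z, ξ (walk d l Δx xn s ((c:ℕ)+1)) ((c:ℕ)+1)⟫) *
            (Dk d l Δx Δt ξ xn i (k+1) s +
              (Δt * ξ (walk d l Δx xn s ((c:ℕ)+1)) ((c:ℕ)+1) i + Δx * stepVec d z i)) ^ 2 := by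
        intro z
        rw [rho_update_self d l Δx lam ξ xn s c z, Xf_update_self d l Δx Δt ξ xn s i c z,
          Dk_update d l Δx Δt ξ xn s i (k+1) c z (by simp [hc])]
      rw [Finset.sum_congr rfl fun z _ => hz z]
      exact zsum_sq_le d Δx Δt lam hd hlam hΔx hΔt _ i (hξ _ _ i) _
    have pre_nonneg : ∀ s : Fin (l+1) → Fin d × Bool,
        0 ≤ Pre d l Δx lam ξ xn (k+1) s :=
      Pre_nonneg d l Δx lam ξ xn hd hlam hξ (k+1)
    have bound1 : (2 * (d:ℝ)) * ∑ s : Fin (l+1) → Fin d × Bool,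
        Pre d l Δx lam ξ xn k s * (Dk d l Δx Δt ξ xn i k s) ^ 2
        ≤ ∑ s : Fin (l+1) → Fin d × Bool,
            Pre d l Δx lam ξ xn (k+1) s *
              ((Dk d l Δx Δt ξ xn i (k+1) s) ^ 2 + Δx ^ 2) := by
      rw [lhs_eq, cond]
      exact Finset.sum_le_sum fun s _ =>
        mul_le_mul_of_nonneg_left (inner_le s) (pre_nonneg s)
    have sum_split : ∑ s : Fin (l+1) → Fin d × Bool,
        Pre d l Δx lam ξ xn (k+1) s *
          ((Dk d l Δx Δt ξ xn i (k+1) s) ^ 2 + Δx ^ 2)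
        = (∑ s : Fin (l+1) → Fin d × Bool,
            Pre d l Δx lam ξ xn (k+1) s * (Dk d l Δx Δt ξ xn i (k+1) s) ^ 2)
          + Δx ^ 2 * ∑ s : Fin (l+1) → Fin d × Bool, Pre d l Δx lam ξ xn (k+1) s := by
      rw [Finset.mul_sum, ← Finset.sum_add_distrib]
      exact Finset.sum_congr rfl fun s _ => by ring
    have ih := IH (k+1) (by omega)
    have hpre := sum_Pre d l Δx lam ξ xn hd (k+1) (by omega)
    have bound2 : (2 * (d:ℝ)) * ∑ s : Fin (l+1) → Fin d × Bool,
        Pre d l Δx lam ξ xn k s * (Dk d l Δx Δt ξ xn i k s) ^ 2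
        ≤ (2 * (d:ℝ)) * (((m : ℝ) + 1) * Δx ^ 2 * (2 * (d:ℝ)) ^ k) := by
      calc (2 * (d:ℝ)) * ∑ s : Fin (l+1) → Fin d × Bool,
          Pre d l Δx lam ξ xn k s * (Dk d l Δx Δt ξ xn i k s) ^ 2
          ≤ (∑ s : Fin (l+1) → Fin d × Bool,
              Pre d l Δx lam ξ xn (k+1) s * (Dk d l Δx Δt ξ xn i (k+1) s) ^ 2)
            + Δx ^ 2 * ∑ s : Fin (l+1) → Fin d × Bool, Pre d l Δx lam ξ xn (k+1) s := by
            rw [← sum_split]; exact bound1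
        _ ≤ (m : ℝ) * Δx ^ 2 * (2 * (d:ℝ)) ^ (k+1) + Δx ^ 2 * (2 * (d:ℝ)) ^ (k+1) := by
            rw [hpre]; exact add_le_add ih le_rfl
        _ = (2 * (d:ℝ)) * (((m : ℝ) + 1) * Δx ^ 2 * (2 * (d:ℝ)) ^ k) := by ring
    have := le_of_mul_le_mul_left bound2 h2d
    calc ∑ s : Fin (l+1) → Fin d × Bool,
        Pre d l Δx lam ξ xn k s * (Dk d l Δx Δt ξ xn i k s) ^ 2
        ≤ ((m : ℝ) + 1) * Δx ^ 2 * (2 * (d:ℝ)) ^ k := this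
      _ = ((m + 1 : ℕ) : ℝ) * Δx ^ 2 * (2 * (d:ℝ)) ^ k := by push_cast; ring

/-- The component identity `(η^k − γ^k)^i = −D^k_i`. -/
lemma comp_eq (i : Fin d) (k : ℕ) (s : Fin (l+1) → Fin d × Bool) :
    (etaCurve d l Δx Δt ξ xn s k - walk d l Δx xn s k) i = -(Dk d l Δx Δt ξ xn i k s) := by
  have hap : ∀ (f : Fin (l+1) → EuclideanSpace ℝ (Fin d)) (i : Fin d),
      (∑ j, f j) i = ∑ j, f j i := fun f i => by rw [WithLp.ofLp_sum, Finset.sum_apply]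
  have h1 : (etaCurve d l Δx Δt ξ xn s k - walk d l Δx xn s k) i
      = -(Δt * ∑ j : Fin (l+1),
            (if k ≤ (j:ℕ) then ξ (walk d l Δx xn s ((j:ℕ)+1)) ((j:ℕ)+1) else 0) i)
        - Δx * ∑ j : Fin (l+1), (if k ≤ (j:ℕ) then stepVec d (s j) else 0) i := by
    simp only [etaCurve, walk, PiLp.sub_apply, PiLp.add_apply, PiLp.smul_apply,
      smul_eq_mul, hap]
    ring
  rw [h1, Dk, Finset.sum_filter]
  have h2 : ∀ (j : Fin (l+1)),
      (if k ≤ (j:ℕ) then ξ (walk d l Δx xn s ((j:ℕ)+1)) ((j:ℕ)+1) else 0) i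
        = if k ≤ (j:ℕ) then ξ (walk d l Δx xn s ((j:ℕ)+1)) ((j:ℕ)+1) i else 0 := by
    intro j; split_ifs <;> simp
  have h3 : ∀ (j : Fin (l+1)),
      (if k ≤ (j:ℕ) then stepVec d (s j) else 0) i
        = if k ≤ (j:ℕ) then stepVec d (s j) i else 0 := by
    intro j; split_ifs <;> simp
  rw [Finset.sum_congr rfl fun j _ => h2 j]
  rw [Finset.sum_congr rfl fun j _ => h3 j]
  rw [Finset.mul_sum, Finset.mul_sum]
  rw [← neg_add']
  rw [← Finset.sum_add_distrib]
  congr 1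
  refine Finset.sum_congr rfl fun j _ => ?_
  rw [Xf]
  split_ifs <;> ring

end Lemmas

/-- For every control `ξ` with `‖ξ‖_∞ ≤ (dλ)⁻¹` and every `0 ≤ k ≤ l+1` and
coordinate `i`, the quantities `σ̃^k_i = E[|(η^k(γ)−γ^k)^i|²]` and `δ̃^k_i = E[|(η^k(γ)−γ^k)^i|]`
satisfy `(δ̃^k_i)² ≤ σ̃^k_i ≤ (t_{l+1} − t_k)·Δx/λ`, where `λ = Δt/Δx`, `t_k = kΔt`. -/
theorem variance_bound (d l : ℕ) (hd : 0 < d) (Δx Δt : ℝ) (hΔx : 0 < Δx) (hΔt : 0 < Δt)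
    (lam : ℝ) (hlam : lam = Δt / Δx)
    (ξ : EuclideanSpace ℝ (Fin d) → ℕ → EuclideanSpace ℝ (Fin d))
    (hξ : ∀ x k i, |ξ x k i| ≤ ((d : ℝ) * lam)⁻¹)
    (xn : EuclideanSpace ℝ (Fin d)) :
    ∀ k ≤ l + 1, ∀ i : Fin d,
      (∑ s : Fin (l + 1) → Fin d × Bool, pathProb d l Δx lam ξ xn s *
          |(etaCurve d l Δx Δt ξ xn s k - walk d l Δx xn s k) i|) ^ 2
        ≤ ∑ s : Fin (l + 1) → Fin d × Bool, pathProb d l Δx lam ξ xn s *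
            |(etaCurve d l Δx Δt ξ xn s k - walk d l Δx xn s k) i| ^ 2 ∧
      ∑ s : Fin (l + 1) → Fin d × Bool, pathProb d l Δx lam ξ xn s *
          |(etaCurve d l Δx Δt ξ xn s k - walk d l Δx xn s k) i| ^ 2
        ≤ (((l : ℝ) + 1) * Δt - (k : ℝ) * Δt) * (Δx / lam) := by
  intro k hk i
  have hlam0 : 0 < lam := by rw [hlam]; positivity
  have hΔt' : Δt = lam * Δx := by rw [hlam]; field_simp
  have hPnn : ∀ s : Fin (l+1) → Fin d × Bool, 0 ≤ pathProb d l Δx lam ξ xn s := fun s => by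
    rw [pathProb_eq]
    exact Pre_nonneg d l Δx lam ξ xn hd hlam0 hξ 0 s
  have hPsum : ∑ s : Fin (l+1) → Fin d × Bool, pathProb d l Δx lam ξ xn s = 1 :=
    sum_pathProb d l Δx lam ξ xn hd
  constructor
  · -- Cauchy–Schwarz
    have cs := Finset.sum_mul_sq_le_sq_mul_sq Finset.univ
      (fun s : Fin (l+1) → Fin d × Bool => Real.sqrt (pathProb d l Δx lam ξ xn s))
      (fun s : Fin (l+1) → Fin d × Bool => Real.sqrt (pathProb d l Δx lam ξ xn s) *
        |(etaCurve d l Δx Δt ξ xn s k - walk d l Δx xn s k) i|)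
    calc (∑ s : Fin (l + 1) → Fin d × Bool, pathProb d l Δx lam ξ xn s *
            |(etaCurve d l Δx Δt ξ xn s k - walk d l Δx xn s k) i|) ^ 2
        = (∑ s : Fin (l + 1) → Fin d × Bool,
            Real.sqrt (pathProb d l Δx lam ξ xn s) *
              (Real.sqrt (pathProb d l Δx lam ξ xn s) *
                |(etaCurve d l Δx Δt ξ xn s k - walk d l Δx xn s k) i|)) ^ 2 := by
          congr 1
          refine Finset.sum_congr rfl fun s _ => ?_
          rw [← mul_assoc, Real.mul_self_sqrt (hPnn s)]
      _ ≤ (∑ s : Fin (l + 1) → Fin d × Bool, Real.sqrt (pathProb d l Δx lam ξ xn s) ^ 2) *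
            ∑ s : Fin (l + 1) → Fin d × Bool,
              (Real.sqrt (pathProb d l Δx lam ξ xn s) *
                |(etaCurve d l Δx Δt ξ xn s k - walk d l Δx xn s k) i|) ^ 2 := cs
      _ = ∑ s : Fin (l + 1) → Fin d × Bool, pathProb d l Δx lam ξ xn s *
            |(etaCurve d l Δx Δt ξ xn s k - walk d l Δx xn s k) i| ^ 2 := by
          rw [Finset.sum_congr rfl fun s _ => Real.sq_sqrt (hPnn s), hPsum, one_mul]
          refine Finset.sum_congr rfl fun s _ => ?_
          rw [mul_pow, Real.sq_sqrt (hPnn s)]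
  · -- variance bound
    have habs : ∀ s : Fin (l+1) → Fin d × Bool,
        |(etaCurve d l Δx Δt ξ xn s k - walk d l Δx xn s k) i| ^ 2
          = (Dk d l Δx Δt ξ xn i k s) ^ 2 := fun s => by
      rw [comp_eq d l Δx Δt ξ xn i k s, abs_neg, sq_abs]
    have hG : ∀ c : Fin (l+1), (c : ℕ) < k → ∀ s z,
        (Dk d l Δx Δt ξ xn i k (Function.update s c z)) ^ 2
          = (Dk d l Δx Δt ξ xn i k s) ^ 2 := fun c hc s z => by
      rw [Dk_update d l Δx Δt ξ xn s i k c z hc]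
    have hm := marg d l Δx lam ξ xn hd k hk
      (fun s => (Dk d l Δx Δt ξ xn i k s) ^ 2) hG
    have hv := varV d l Δx Δt lam ξ xn hd hlam0 hΔx hΔt' hξ i (l + 1 - k) k (by omega)
    have h2dk : (0:ℝ) < (2 * (d:ℝ)) ^ k := by positivity
    have hfin : ∑ s : Fin (l + 1) → Fin d × Bool, pathProb d l Δx lam ξ xn s *
        (Dk d l Δx Δt ξ xn i k s) ^ 2 ≤ ((l + 1 - k : ℕ) : ℝ) * Δx ^ 2 := by
      have h1 : (2 * (d:ℝ)) ^ k * (∑ s : Fin (l + 1) → Fin d × Bool,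
          pathProb d l Δx lam ξ xn s * (Dk d l Δx Δt ξ xn i k s) ^ 2)
          ≤ (2 * (d:ℝ)) ^ k * (((l + 1 - k : ℕ) : ℝ) * Δx ^ 2) := by
        rw [hm]
        calc ∑ s : Fin (l+1) → Fin d × Bool,
            Pre d l Δx lam ξ xn k s * (Dk d l Δx Δt ξ xn i k s) ^ 2
            ≤ ((l + 1 - k : ℕ) : ℝ) * Δx ^ 2 * (2 * (d:ℝ)) ^ k := hv
          _ = (2 * (d:ℝ)) ^ k * (((l + 1 - k : ℕ) : ℝ) * Δx ^ 2) := by ring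
      exact le_of_mul_le_mul_left h1 h2dk
    have hrhs : (((l : ℝ) + 1) * Δt - (k : ℝ) * Δt) * (Δx / lam)
        = ((l + 1 - k : ℕ) : ℝ) * Δx ^ 2 := by
      have hcast : ((l + 1 - k : ℕ) : ℝ) = (l : ℝ) + 1 - (k : ℝ) := by
        rw [Nat.cast_sub hk]
        push_cast
        ring
      rw [hcast, hΔt', hlam]
      rw [hΔt'] at hΔt ⊢
      field_simp
    rw [Finset.sum_congr rfl fun s _ => by rw [habs s], hrhs]
    exact hfin


end RandomWalkVariance
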